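/- ∫₀¹ |T₄(x)| dx = 1/14580, where T₄(x) = x²(x-1/3)(x-3/5)/24 for x ∈ [0,1/2) and T₄(x) = (x-1)²(x-2/3)(x-2/5)/24 for x ∈ [1/2,1]. -/

import Mathlib

set_option maxHeartbeats 1000000

open intervalIntegral Set

private lemma quart_int (a b c d e u v : ℝ) :
    (∫ x in u..v, (a*x^4 + b*x^3 + c*x^2 + d*x + e)) =
      (a*v^5/5 + b*v^4/4 + c*v^3/3 + d*v^2/2 + e*v) -
      (a*u^5/5 + b*u^4/4 + c*u^3/3 + d*u^2/2 + e*u) := by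
  have h : ∀ x ∈ Set.uIcc u v,
      HasDerivAt (fun x => a*x^5/5 + b*x^4/4 + c*x^3/3 + d*x^2/2 + e*x)
        (a*x^4 + b*x^3 + c*x^2 + d*x + e) x := by
    intro x _
    have h1 := ((((hasDerivAt_pow 5 x).const_mul a).div_const 5).add
        (((((hasDerivAt_pow 4 x).const_mul b).div_const 4).add
          ((((hasDerivAt_pow 3 x).const_mul c).div_const 3).add
            (((((hasDerivAt_pow 2 x).const_mul d).div_const 2)).add
              ((hasDerivAt_id x).const_mul e))))))
    simp only [id_eq, Pi.add_def] at h1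
    have h2 : (fun x : ℝ => a*x^5/5 + b*x^4/4 + c*x^3/3 + d*x^2/2 + e*x)
        = (fun x : ℝ => a*x^5/5 + (b*x^4/4 + (c*x^3/3 + (d*x^2/2 + e*x)))) := by
      funext y; ring
    rw [h2]
    refine h1.congr_deriv ?_
    push_cast
    ring
  rw [intervalIntegral.integral_eq_sub_of_hasDerivAt h
    ((Continuous.intervalIntegrable (by continuity) u v))]

theorem T4_abs_integral :
    (∫ x in (0:ℝ)..1,
      |if x < 1/2 then x ^ 2 * (x - 1/3) * (x - 3/5) / 24
        else (x - 1) ^ 2 * (x - 2/3) * (x - 2/5) / 24|) = 1 / 14580 := by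
  set h : ℝ → ℝ := fun x =>
      |if x < 1/2 then x ^ 2 * (x - 1/3) * (x - 3/5) / 24
        else (x - 1) ^ 2 * (x - 2/3) * (x - 2/5) / 24| with hh
  -- polynomial pieces
  set P1 : ℝ → ℝ := fun x => (1/24)*x^4 + (-7/180)*x^3 + (1/120)*x^2 + 0*x + 0 with hP1
  set P2 : ℝ → ℝ := fun x => (-1/24)*x^4 + (7/180)*x^3 + (-1/120)*x^2 + 0*x + 0 with hP2
  set P3 : ℝ → ℝ := fun x =>
    (-1/24)*x^4 + (23/180)*x^3 + (-17/120)*x^2 + (1/15)*x + (-1/90) with hP3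
  set P4 : ℝ → ℝ := fun x =>
    (1/24)*x^4 + (-23/180)*x^3 + (17/120)*x^2 + (-1/15)*x + (1/90) with hP4
  have cP1 : Continuous P1 := by rw [hP1]; continuity
  have cP2 : Continuous P2 := by rw [hP2]; continuity
  have cP3 : Continuous P3 := by rw [hP3]; continuity
  have cP4 : Continuous P4 := by rw [hP4]; continuity
  have e1 : Set.EqOn h P1 (Set.uIcc (0:ℝ) (1/3)) := by
    intro x hx
    rw [Set.uIcc_of_le (by norm_num)] at hx
    obtain ⟨hx1, hx2⟩ := hx
    have hlt : x < 1/2 := by linarith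
    have hnn : (0:ℝ) ≤ x ^ 2 * (x - 1/3) * (x - 3/5) / 24 := by
      have h0 : x ^ 2 * (x - 1/3) * (x - 3/5) = x^2 * ((1/3 - x) * (3/5 - x)) := by ring
      rw [h0]
      have := mul_nonneg (sq_nonneg x)
        (mul_nonneg (by linarith : (0:ℝ) ≤ 1/3 - x) (by linarith : (0:ℝ) ≤ 3/5 - x))
      linarith
    simp only [hh, if_pos hlt, abs_of_nonneg hnn, hP1]
    ring
  have e2 : Set.EqOn h P2 (Set.uIcc (1/3 : ℝ) (1/2)) := by
    intro x hx
    rw [Set.uIcc_of_le (by norm_num)] at hx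
    obtain ⟨hx1, hx2⟩ := hx
    have key : (if x < 1/2 then x ^ 2 * (x - 1/3) * (x - 3/5) / 24
        else (x - 1) ^ 2 * (x - 2/3) * (x - 2/5) / 24)
        = x ^ 2 * (x - 1/3) * (x - 3/5) / 24 := by
      by_cases hlt : x < 1/2
      · rw [if_pos hlt]
      · have : x = 1/2 := le_antisymm hx2 (by linarith)
        rw [if_neg hlt, this]; norm_num
    have hnp : x ^ 2 * (x - 1/3) * (x - 3/5) / 24 ≤ 0 := by
      have h0 : x ^ 2 * (x - 1/3) * (x - 3/5) = -(x^2 * ((x - 1/3) * (3/5 - x))) := by ring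
      have := mul_nonneg (sq_nonneg x)
        (mul_nonneg (by linarith : (0:ℝ) ≤ x - 1/3) (by linarith : (0:ℝ) ≤ 3/5 - x))
      rw [h0]; linarith
    simp only [hh, key, abs_of_nonpos hnp, hP2]
    ring
  have e3 : Set.EqOn h P3 (Set.uIcc (1/2 : ℝ) (2/3)) := by
    intro x hx
    rw [Set.uIcc_of_le (by norm_num)] at hx
    obtain ⟨hx1, hx2⟩ := hx
    have hlt : ¬ (x < 1/2) := by linarith
    have hnp : (x - 1) ^ 2 * (x - 2/3) * (x - 2/5) / 24 ≤ 0 := by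
      have h0 : (x - 1) ^ 2 * (x - 2/3) * (x - 2/5)
          = -((x-1)^2 * ((2/3 - x) * (x - 2/5))) := by ring
      have := mul_nonneg (sq_nonneg (x-1))
        (mul_nonneg (by linarith : (0:ℝ) ≤ 2/3 - x) (by linarith : (0:ℝ) ≤ x - 2/5))
      rw [h0]; linarith
    simp only [hh, if_neg hlt, abs_of_nonpos hnp, hP3]
    ring
  have e4 : Set.EqOn h P4 (Set.uIcc (2/3 : ℝ) 1) := by
    intro x hx
    rw [Set.uIcc_of_le (by norm_num)] at hx
    obtain ⟨hx1, hx2⟩ := hx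
    have hlt : ¬ (x < 1/2) := by linarith
    have hnn : (0:ℝ) ≤ (x - 1) ^ 2 * (x - 2/3) * (x - 2/5) / 24 := by
      have h0 : (x - 1) ^ 2 * (x - 2/3) * (x - 2/5)
          = (x-1)^2 * ((x - 2/3) * (x - 2/5)) := by ring
      have := mul_nonneg (sq_nonneg (x-1))
        (mul_nonneg (by linarith : (0:ℝ) ≤ x - 2/3) (by linarith : (0:ℝ) ≤ x - 2/5))
      rw [h0]; linarith
    simp only [hh, if_neg hlt, abs_of_nonneg hnn, hP4]
    ring
  have i1 : IntervalIntegrable h MeasureTheory.volume 0 (1/3) :=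
    (cP1.continuousOn.congr e1).intervalIntegrable
  have i2 : IntervalIntegrable h MeasureTheory.volume (1/3) (1/2) :=
    (cP2.continuousOn.congr e2).intervalIntegrable
  have i3 : IntervalIntegrable h MeasureTheory.volume (1/2) (2/3) :=
    (cP3.continuousOn.congr e3).intervalIntegrable
  have i4 : IntervalIntegrable h MeasureTheory.volume (2/3) 1 :=
    (cP4.continuousOn.congr e4).intervalIntegrable
  have split : (∫ x in (0:ℝ)..1, h x)
      = (∫ x in (0:ℝ)..(1/3), h x) + (∫ x in (1/3:ℝ)..(1/2), h x)
        + (∫ x in (1/2:ℝ)..(2/3), h x) + (∫ x in (2/3:ℝ)..1, h x) := by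
    rw [← intervalIntegral.integral_add_adjacent_intervals (i1.trans i2) (i3.trans i4),
        ← intervalIntegral.integral_add_adjacent_intervals i1 i2,
        ← intervalIntegral.integral_add_adjacent_intervals i3 i4]
    ring
  have v1 : (∫ x in (0:ℝ)..(1/3), h x) = 1/58320 := by
    rw [intervalIntegral.integral_congr e1, hP1, quart_int]; norm_num
  have v2 : (∫ x in (1/3:ℝ)..(1/2), h x) = 1/58320 := by
    rw [intervalIntegral.integral_congr e2, hP2, quart_int]; norm_num
  have v3 : (∫ x in (1/2:ℝ)..(2/3), h x) = 1/58320 := by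
    rw [intervalIntegral.integral_congr e3, hP3, quart_int]; norm_num
  have v4 : (∫ x in (2/3:ℝ)..1, h x) = 1/58320 := by
    rw [intervalIntegral.integral_congr e4, hP4, quart_int]; norm_num
  show (∫ x in (0:ℝ)..1, h x) = 1/14580
  rw [split, v1, v2, v3, v4]; norm_num
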